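/- Let A be Hurwitz and let P be the frequency-limited controllability gramian P = (1/2π) ∫_{−Ω}^{Ω} (jνI − A)^{-1} BB^T (jνI − A)^{-*} dν. Then P satisfies the Lyapunov equation A P + P A^T + S_ω[A] B B^T + B B^T S_ω[A^T] = 0, where S_ω[A] = (j/2π) ln((A + jΩI)(A − jΩI)^{-1}). -/
import Mathlib


open Matrix

/-- The principal matrix logarithm, expressed via its standard integral representation. -/
noncomputable def matLog {n : ℕ} (N : Matrix (Fin n) (Fin n) ℂ) : Matrix (Fin n) (Fin n) ℂ :=
  Matrix.of fun i k =>
    ∫ s in (0:ℝ)..1, ((N - 1) * ((s : ℂ) • (N - 1) + 1)⁻¹) i k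

/-- The resolventIm `(jν I - A)⁻¹` of a real matrix, as a complex matrix. -/
noncomputable def resolventIm {n : ℕ} (A : Matrix (Fin n) (Fin n) ℝ) (ν : ℝ) :
    Matrix (Fin n) (Fin n) ℂ :=
  (((ν : ℂ) * Complex.I) • (1 : Matrix (Fin n) (Fin n) ℂ) - A.map Complex.ofReal)⁻¹

/-- The frequency-limited controllability gramian (entrywise integral). -/
noncomputable def flGram {n m : ℕ} (A : Matrix (Fin n) (Fin n) ℝ)
    (B : Matrix (Fin n) (Fin m) ℝ) (Ω : ℝ) : Matrix (Fin n) (Fin n) ℂ :=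
  Matrix.of fun i k =>
    ((1 / (2 * Real.pi) : ℝ) : ℂ) *
      ∫ ν in (-Ω)..Ω,
        (resolventIm A ν * B.map Complex.ofReal * (B.map Complex.ofReal)ᴴ *
          (resolventIm A ν)ᴴ) i k

/-- `S_ω[A] = (j/2π) ln((A + jΩI)(A − jΩI)⁻¹)`. -/
noncomputable def Somega {n : ℕ} (A : Matrix (Fin n) (Fin n) ℝ) (Ω : ℝ) :
    Matrix (Fin n) (Fin n) ℂ :=
  (Complex.I / ((2 * Real.pi : ℝ) : ℂ)) •
    matLog ((A.map Complex.ofReal + ((Ω : ℂ) * Complex.I) • (1 : Matrix (Fin n) (Fin n) ℂ)) *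
      (A.map Complex.ofReal - ((Ω : ℂ) * Complex.I) • (1 : Matrix (Fin n) (Fin n) ℂ))⁻¹)


noncomputable def Dmat {n : ℕ} (A : Matrix (Fin n) (Fin n) ℝ) (ν : ℝ) :
    Matrix (Fin n) (Fin n) ℂ :=
  ((ν : ℂ) * Complex.I) • (1 : Matrix (Fin n) (Fin n) ℂ) - A.map Complex.ofReal

variable {n m : ℕ} (A : Matrix (Fin n) (Fin n) ℝ)

lemma resolventIm_eq (ν : ℝ) : resolventIm A ν = (Dmat A ν)⁻¹ := rfl

lemma isUnit_Dmat (hA : ∀ μ ∈ spectrum ℂ (A.map Complex.ofReal), μ.re < 0) (ν : ℝ) :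
    IsUnit (Dmat A ν) := by
  have h : ((ν : ℂ) * Complex.I) ∉ spectrum ℂ (A.map Complex.ofReal) := by
    intro h; have := hA _ h; simp at this
  rw [spectrum.notMem_iff] at h
  rwa [Algebra.algebraMap_eq_smul_one] at h

lemma det_Dmat_ne (hA : ∀ μ ∈ spectrum ℂ (A.map Complex.ofReal), μ.re < 0) (ν : ℝ) :
    (Dmat A ν).det ≠ 0 :=
  isUnit_iff_ne_zero.mp ((Matrix.isUnit_iff_isUnit_det _).mp (isUnit_Dmat A hA ν))

lemma Dmat_mul_res (hA : ∀ μ ∈ spectrum ℂ (A.map Complex.ofReal), μ.re < 0) (ν : ℝ) :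
    Dmat A ν * resolventIm A ν = 1 :=
  Matrix.mul_nonsing_inv _ ((Matrix.isUnit_iff_isUnit_det _).mp (isUnit_Dmat A hA ν))

lemma res_mul_Dmat (hA : ∀ μ ∈ spectrum ℂ (A.map Complex.ofReal), μ.re < 0) (ν : ℝ) :
    resolventIm A ν * Dmat A ν = 1 :=
  Matrix.nonsing_inv_mul _ ((Matrix.isUnit_iff_isUnit_det _).mp (isUnit_Dmat A hA ν))

lemma cont_Dmat : Continuous fun ν : ℝ => Dmat A ν := by
  apply continuous_matrix; intro i j
  simp only [Dmat, Matrix.sub_apply, Matrix.smul_apply, smul_eq_mul]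
  fun_prop

lemma cont_res (hA : ∀ μ ∈ spectrum ℂ (A.map Complex.ofReal), μ.re < 0) :
    Continuous fun ν : ℝ => resolventIm A ν := by
  have h1 := cont_Dmat A
  have hdet := h1.matrix_det
  have hadj := h1.matrix_adjugate
  have he : (fun ν => resolventIm A ν)
      = fun ν => ((Dmat A ν).det)⁻¹ • (Dmat A ν).adjugate := by
    funext ν; rw [resolventIm_eq, Matrix.inv_def, Ring.inverse_eq_inv']
  rw [he]
  apply continuous_matrix; intro i j
  simp only [Matrix.smul_apply, smul_eq_mul]
  exact (hdet.inv₀ (det_Dmat_ne A hA)).mul (hadj.matrix_elem i j)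

lemma mapH : (A.map Complex.ofReal)ᴴ = (A.map Complex.ofReal)ᵀ := by
  ext i j
  simp [Matrix.conjTranspose_apply, Matrix.map_apply, Complex.conj_ofReal]

lemma DmatH (ν : ℝ) : (Dmat A ν)ᴴ = (Dmat Aᵀ (-ν)) := by
  ext i j
  simp only [Dmat, Matrix.conjTranspose_apply, Matrix.sub_apply, Matrix.smul_apply,
    Matrix.one_apply, Matrix.map_apply, Matrix.transpose_apply, star_sub, star_mul',
    Complex.star_def, Complex.conj_ofReal, smul_eq_mul, Complex.conj_I]
  by_cases h : i = j <;> simp [h, eq_comm] <;> ring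

lemma DmatT (ν : ℝ) : (Dmat A ν)ᵀ = Dmat Aᵀ ν := by
  ext i j
  simp [Dmat, Matrix.transpose_apply, Matrix.sub_apply, Matrix.smul_apply, Matrix.one_apply,
    Matrix.map_apply, eq_comm]

lemma resH (ν : ℝ) : (resolventIm A ν)ᴴ = (resolventIm A (-ν))ᵀ := by
  rw [resolventIm_eq, resolventIm_eq, Matrix.conjTranspose_nonsing_inv,
    Matrix.transpose_nonsing_inv, DmatH, DmatT]

lemma logstep (hA : ∀ μ ∈ spectrum ℂ (A.map Complex.ofReal), μ.re < 0) {Ω : ℝ} (hΩ : 0 < Ω)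
    (s : ℝ) :
    ((A.map Complex.ofReal + ((Ω : ℂ) * Complex.I) • (1 : Matrix (Fin n) (Fin n) ℂ)) *
        (A.map Complex.ofReal - ((Ω : ℂ) * Complex.I) • (1 : Matrix (Fin n) (Fin n) ℂ))⁻¹ - 1) *
      ((s : ℂ) • ((A.map Complex.ofReal + ((Ω : ℂ) * Complex.I) • (1 : Matrix (Fin n) (Fin n) ℂ)) *
        (A.map Complex.ofReal - ((Ω : ℂ) * Complex.I) • (1 : Matrix (Fin n) (Fin n) ℂ))⁻¹ - 1) + 1)⁻¹
    = (-(2 * (Ω : ℂ)) * Complex.I) • resolventIm A (Ω * (1 - 2 * s)) := by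
  set Ac := A.map Complex.ofReal with hAc
  set c : ℂ := (Ω : ℂ) * Complex.I with hc
  set D : Matrix (Fin n) (Fin n) ℂ := Ac - c • 1 with hD
  set μ : ℝ := Ω * (1 - 2 * s) with hμ
  have hDneg : D = -(Dmat A Ω) := by rw [hD, Dmat, neg_sub, hc, hAc]
  have hDR : D * (-(resolventIm A Ω)) = 1 := by
    rw [hDneg, Matrix.neg_mul, Matrix.mul_neg, neg_neg, Dmat_mul_res A hA]
  have hDdet : IsUnit D.det := Matrix.isUnit_det_of_right_inverse hDR
  have hDinv : D⁻¹ = -(resolventIm A Ω) := Matrix.inv_eq_right_inv hDR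
  have hDD : D * D⁻¹ = 1 := Matrix.mul_nonsing_inv _ hDdet
  have hDD' : D⁻¹ * D = 1 := Matrix.nonsing_inv_mul _ hDdet
  set E : Matrix (Fin n) (Fin n) ℂ := Ac + (((2 * s - 1) * Ω : ℝ) * Complex.I) • 1 with hE
  have hEneg : E = -(Dmat A μ) := by
    rw [Dmat, neg_sub, hE, hAc]
    have hsc : ((((2 * s - 1) * Ω : ℝ)) * Complex.I : ℂ) = -(((μ : ℝ) : ℂ) * Complex.I) := by
      rw [hμ]; push_cast; ring
    rw [hsc, neg_smul, ← sub_eq_add_neg]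
  have hER : E * (-(resolventIm A μ)) = 1 := by
    rw [hEneg, Matrix.neg_mul, Matrix.mul_neg, neg_neg, Dmat_mul_res A hA]
  have hEdet : IsUnit E.det := Matrix.isUnit_det_of_right_inverse hER
  have hEinv : E⁻¹ = -(resolventIm A μ) := Matrix.inv_eq_right_inv hER
  have hN1 : (Ac + c • 1) * D⁻¹ - 1 = (2 * c) • D⁻¹ := by
    have h : (Ac + c • 1) - D = (2 * c) • 1 := by rw [hD]; module
    calc (Ac + c • 1) * D⁻¹ - 1 = (Ac + c • 1) * D⁻¹ - D * D⁻¹ := by rw [hDD]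
      _ = ((Ac + c • 1) - D) * D⁻¹ := (Matrix.sub_mul _ _ _).symm
      _ = (2 * c) • D⁻¹ := by rw [h, Matrix.smul_mul, Matrix.one_mul]
  have hN2 : (s : ℂ) • ((Ac + c • 1) * D⁻¹ - 1) + 1 = E * D⁻¹ := by
    rw [hN1, smul_smul]
    have hE2 : E = ((s : ℂ) * (2 * c)) • 1 + D := by
      rw [hE, hD, hc]
      rw [show ((((2 * s - 1) * Ω : ℝ)) * Complex.I : ℂ)
        = (s : ℂ) * (2 * ((Ω : ℂ) * Complex.I)) - (Ω : ℂ) * Complex.I by push_cast; ring]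
      module
    rw [hE2, Matrix.add_mul, Matrix.smul_mul, Matrix.one_mul, hDD]
  rw [hN2, hN1, Matrix.mul_inv_rev, Matrix.nonsing_inv_nonsing_inv _ hDdet, hEinv,
    Matrix.smul_mul, Matrix.mul_neg, Matrix.mul_neg, ← Matrix.mul_assoc, hDD', Matrix.one_mul,
    smul_neg, ← neg_smul]
  congr 1
  rw [hc]; ring

lemma Somega_eq (hA : ∀ μ ∈ spectrum ℂ (A.map Complex.ofReal), μ.re < 0) {Ω : ℝ} (hΩ : 0 < Ω) :
    Somega A Ω = Matrix.of fun i k => ((1 / (2 * Real.pi) : ℝ) : ℂ) *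
      ∫ ν in (-Ω)..Ω, resolventIm A ν i k := by
  ext i k
  rw [Somega, matLog]
  simp only [Matrix.smul_apply, Matrix.of_apply, smul_eq_mul]
  simp only [logstep A hA hΩ, Matrix.smul_apply, smul_eq_mul]
  rw [intervalIntegral.integral_const_mul]
  simp only [show ∀ s : ℝ, Ω * (1 - 2 * s) = -(2 * Ω) * s + Ω from fun s => by ring]
  have hΩ' : (-(2 * Ω) : ℝ) ≠ 0 := by nlinarith
  have hcv := intervalIntegral.integral_comp_mul_add
    (a := (0:ℝ)) (b := 1) (f := fun ν => resolventIm A ν i k) hΩ' Ω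
  rw [show -(2*Ω)*(0:ℝ)+Ω = Ω by ring, show -(2*Ω)*(1:ℝ)+Ω = -Ω by ring] at hcv
  rw [hcv, intervalIntegral.integral_symm]
  have hπ : ((Real.pi : ℝ) : ℂ) ≠ 0 := Complex.ofReal_ne_zero.mpr Real.pi_ne_zero
  have hΩc : ((Ω : ℝ) : ℂ) ≠ 0 := Complex.ofReal_ne_zero.mpr (ne_of_gt hΩ)
  rw [Complex.real_smul]
  push_cast
  field_simp
  ring_nf
  rw [Complex.I_sq]
  ring

lemma lyap_alg (c : ℂ) (Ac R M RH : Matrix (Fin n) (Fin n) ℂ)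
    (hAR : Ac * R = c • R - 1)
    (hRH : RH * Acᵀ = (-c) • RH - 1) :
    Ac * (R * M * RH) + (R * M * RH) * Acᵀ + M * RH + R * M = 0 := by
  have h : Ac * (R * M * RH) + (R * M * RH) * Acᵀ + M * RH + R * M
      = (Ac * R) * (M * RH) + (R * M) * (RH * Acᵀ) + M * RH + R * M := by
    noncomm_ring
  rw [h, hAR, hRH]
  simp only [sub_mul, mul_sub, smul_mul_assoc, mul_smul_comm, Matrix.mul_smul, Matrix.smul_mul,
    one_mul, mul_one, neg_smul, neg_one_smul, smul_smul, mul_neg, neg_mul, Matrix.mul_assoc]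
  abel

lemma key (hA : ∀ μ ∈ spectrum ℂ (A.map Complex.ofReal), μ.re < 0) (ν : ℝ)
    (M : Matrix (Fin n) (Fin n) ℂ) :
    A.map Complex.ofReal * (resolventIm A ν * M * (resolventIm A ν)ᴴ) +
      (resolventIm A ν * M * (resolventIm A ν)ᴴ) * (A.map Complex.ofReal)ᵀ +
      M * (resolventIm A ν)ᴴ + resolventIm A ν * M = 0 := by
  set Ac := A.map Complex.ofReal with hAc
  set R := resolventIm A ν with hR
  set c : ℂ := (ν : ℂ) * Complex.I with hc
  have h1 : Dmat A ν * R = 1 := Dmat_mul_res A hA ν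
  have hAR : Ac * R = c • R - 1 := by
    have h1' : c • R - Ac * R = 1 := by
      calc c • R - Ac * R = (c • 1 - Ac) * R := by
            rw [Matrix.sub_mul, Matrix.smul_mul, Matrix.one_mul]
        _ = 1 := h1
    have h2 := sub_eq_iff_eq_add.mp h1'
    rw [h2]; abel
  have hRH : Rᴴ * Acᵀ = (-c) • Rᴴ - 1 := by
    have h2 : Rᴴ * (Dmat A ν)ᴴ = 1 := by
      rw [← Matrix.conjTranspose_mul, h1, Matrix.conjTranspose_one]
    have hDH : (Dmat A ν)ᴴ = (-c) • 1 - Acᵀ := by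
      rw [hc, hAc]
      ext i j
      simp only [Dmat, Matrix.conjTranspose_apply, Matrix.sub_apply, Matrix.smul_apply,
        Matrix.one_apply, Matrix.transpose_apply, Matrix.map_apply, star_sub, star_mul',
        Complex.star_def, Complex.conj_ofReal, Complex.conj_I, smul_eq_mul]
      by_cases h : i = j <;> simp [h, eq_comm] <;> ring
    have h3 : Rᴴ * ((-c) • 1 - Acᵀ) = 1 := by rw [← hDH]; exact h2
    have h4 : (-c) • Rᴴ - Rᴴ * Acᵀ = 1 := by
      rw [← h3, Matrix.mul_sub, Matrix.mul_smul, Matrix.mul_one]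
    have h5 := sub_eq_iff_eq_add.mp h4
    rw [h5]; abel
  exact lyap_alg c Ac R M Rᴴ hAR hRH

lemma mul_intOf (C : Matrix (Fin n) (Fin n) ℂ) (c : ℂ) (a b : ℝ)
    (F : ℝ → Matrix (Fin n) (Fin n) ℂ)
    (hF : ∀ j k, IntervalIntegrable (fun ν => F ν j k) MeasureTheory.volume a b) :
    C * (Matrix.of fun i k => c * ∫ ν in a..b, F ν i k)
      = Matrix.of fun i k => c * ∫ ν in a..b, (C * F ν) i k := by
  ext i k
  simp only [Matrix.mul_apply, Matrix.of_apply]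
  calc ∑ j, C i j * (c * ∫ ν in a..b, F ν j k)
      = c * ∑ j, ∫ ν in a..b, C i j * F ν j k := by
        rw [Finset.mul_sum]
        congr 1; funext j
        rw [intervalIntegral.integral_const_mul]; ring
    _ = c * ∫ ν in a..b, ∑ j, C i j * F ν j k := by
        rw [intervalIntegral.integral_finset_sum]
        intro j _
        exact (hF j k).const_mul _
    _ = c * ∫ ν in a..b, (C * F ν) i k := by
        congr 1

lemma intOf_mul (C : Matrix (Fin n) (Fin n) ℂ) (c : ℂ) (a b : ℝ)
    (F : ℝ → Matrix (Fin n) (Fin n) ℂ)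
    (hF : ∀ j k, IntervalIntegrable (fun ν => F ν j k) MeasureTheory.volume a b) :
    (Matrix.of fun i k => c * ∫ ν in a..b, F ν i k) * C
      = Matrix.of fun i k => c * ∫ ν in a..b, (F ν * C) i k := by
  ext i k
  simp only [Matrix.mul_apply, Matrix.of_apply]
  calc ∑ j, (c * ∫ ν in a..b, F ν i j) * C j k
      = c * ∑ j, ∫ ν in a..b, F ν i j * C j k := by
        rw [Finset.mul_sum]
        congr 1; funext j
        rw [intervalIntegral.integral_mul_const]; ring
    _ = c * ∫ ν in a..b, ∑ j, F ν i j * C j k := by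
        rw [intervalIntegral.integral_finset_sum]
        intro j _
        exact (hF i j).mul_const _
    _ = c * ∫ ν in a..b, (F ν * C) i k := by
        congr 1

theorem stmt9 {n m : ℕ} (A : Matrix (Fin n) (Fin n) ℝ) (B : Matrix (Fin n) (Fin m) ℝ)
    (Ω : ℝ) (hΩ : 0 < Ω)
    (hA : ∀ μ ∈ spectrum ℂ (A.map Complex.ofReal), μ.re < 0)
    (P : Matrix (Fin n) (Fin n) ℂ) (hP : P = flGram A B Ω) :
    A.map Complex.ofReal * P + P * (A.map Complex.ofReal)ᵀ +
      Somega A Ω * B.map Complex.ofReal * (B.map Complex.ofReal)ᵀ +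
      B.map Complex.ofReal * (B.map Complex.ofReal)ᵀ * (Somega A Ω)ᵀ = 0 := by
  subst hP
  have hBH : (B.map Complex.ofReal)ᴴ = (B.map Complex.ofReal)ᵀ := by
    ext i j
    simp [Matrix.conjTranspose_apply, Matrix.transpose_apply, Matrix.map_apply,
      Complex.conj_ofReal]
  set Ac := A.map Complex.ofReal with hAc
  set Bc := B.map Complex.ofReal with hBc
  set M : Matrix (Fin n) (Fin n) ℂ := Bc * Bcᴴ with hM
  set c : ℂ := ((1 / (2 * Real.pi) : ℝ) : ℂ) with hcc
  -- continuity
  have hcR : Continuous fun ν : ℝ => resolventIm A ν := cont_res A hA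
  have hcRH : Continuous fun ν : ℝ => (resolventIm A ν)ᴴ := hcR.matrix_conjTranspose
  have hcRT : Continuous fun ν : ℝ => (resolventIm A ν)ᵀ := hcR.matrix_transpose
  have hcF : Continuous fun ν : ℝ => resolventIm A ν * M * (resolventIm A ν)ᴴ :=
    (hcR.matrix_mul continuous_const).matrix_mul hcRH
  have hiF : ∀ j k, IntervalIntegrable
      (fun ν => (resolventIm A ν * M * (resolventIm A ν)ᴴ) j k) MeasureTheory.volume (-Ω) Ω :=
    fun j k => (hcF.matrix_elem j k).intervalIntegrable _ _
  have hiR : ∀ j k, IntervalIntegrable (fun ν => resolventIm A ν j k)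
      MeasureTheory.volume (-Ω) Ω := fun j k => (hcR.matrix_elem j k).intervalIntegrable _ _
  have hiRT : ∀ j k, IntervalIntegrable (fun ν => (resolventIm A ν)ᵀ j k)
      MeasureTheory.volume (-Ω) Ω := fun j k => (hcRT.matrix_elem j k).intervalIntegrable _ _
  -- rewrite the gramian
  have hPE : flGram A B Ω = Matrix.of fun i k =>
      c * ∫ ν in (-Ω)..Ω, (resolventIm A ν * M * (resolventIm A ν)ᴴ) i k := by
    ext i k
    rw [flGram]
    simp only [Matrix.of_apply]
    congr 1
    apply intervalIntegral.integral_congr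
    intro ν _
    simp only [← hBc, hM, Matrix.mul_assoc]
  have T1 : Ac * flGram A B Ω = Matrix.of fun i k =>
      c * ∫ ν in (-Ω)..Ω, (Ac * (resolventIm A ν * M * (resolventIm A ν)ᴴ)) i k := by
    rw [hPE]; exact mul_intOf Ac c _ _ _ hiF
  have T2 : flGram A B Ω * Acᵀ = Matrix.of fun i k =>
      c * ∫ ν in (-Ω)..Ω, ((resolventIm A ν * M * (resolventIm A ν)ᴴ) * Acᵀ) i k := by
    rw [hPE]; exact intOf_mul Acᵀ c _ _ _ hiF
  have hSE : Somega A Ω = Matrix.of fun i k => c * ∫ ν in (-Ω)..Ω, resolventIm A ν i k :=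
    Somega_eq A hA hΩ
  have T3 : Somega A Ω * Bc * Bcᵀ = Matrix.of fun i k =>
      c * ∫ ν in (-Ω)..Ω, (resolventIm A ν * M) i k := by
    rw [Matrix.mul_assoc, ← hBH, ← hM, hSE]; exact intOf_mul M c _ _ _ hiR
  have hST : (Somega A Ω)ᵀ = Matrix.of fun i k =>
      c * ∫ ν in (-Ω)..Ω, (resolventIm A ν)ᵀ i k := by
    rw [hSE]; ext i k
    simp [Matrix.transpose_apply, Matrix.of_apply]
  have T4 : Bc * Bcᵀ * (Somega A Ω)ᵀ = Matrix.of fun i k =>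
      c * ∫ ν in (-Ω)..Ω, (M * (resolventIm A ν)ᴴ) i k := by
    rw [← hBH, ← hM, hST, mul_intOf M c _ _ _ hiRT]
    ext i k
    simp only [Matrix.of_apply]
    congr 1
    have h := intervalIntegral.integral_comp_neg (a := (-Ω)) (b := Ω)
      (f := fun ν => (M * (resolventIm A ν)ᵀ) i k)
    simp only [neg_neg] at h
    simp only [resH]
    exact h.symm
  rw [T1, T2, T3, T4]
  ext i k
  simp only [Matrix.add_apply, Matrix.of_apply, Matrix.zero_apply]
  -- integrability of the four integrands' entries
  have hc1 : Continuous fun ν : ℝ => Ac * (resolventIm A ν * M * (resolventIm A ν)ᴴ) :=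
    continuous_const.matrix_mul hcF
  have hc2 : Continuous fun ν : ℝ => (resolventIm A ν * M * (resolventIm A ν)ᴴ) * Acᵀ :=
    hcF.matrix_mul continuous_const
  have hc3 : Continuous fun ν : ℝ => resolventIm A ν * M :=
    hcR.matrix_mul continuous_const
  have hc4 : Continuous fun ν : ℝ => M * (resolventIm A ν)ᴴ :=
    continuous_const.matrix_mul hcRH
  have h1 := ((hc1.matrix_elem i k).intervalIntegrable (μ := MeasureTheory.volume)) (-Ω) Ω
  have h2 := ((hc2.matrix_elem i k).intervalIntegrable (μ := MeasureTheory.volume)) (-Ω) Ω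
  have h3 := ((hc3.matrix_elem i k).intervalIntegrable (μ := MeasureTheory.volume)) (-Ω) Ω
  have h4 := ((hc4.matrix_elem i k).intervalIntegrable (μ := MeasureTheory.volume)) (-Ω) Ω
  have hsum : (∫ ν in (-Ω)..Ω, (Ac * (resolventIm A ν * M * (resolventIm A ν)ᴴ)) i k) +
      (∫ ν in (-Ω)..Ω, ((resolventIm A ν * M * (resolventIm A ν)ᴴ) * Acᵀ) i k) +
      (∫ ν in (-Ω)..Ω, (resolventIm A ν * M) i k) +
      (∫ ν in (-Ω)..Ω, (M * (resolventIm A ν)ᴴ) i k) = 0 := by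
    rw [← intervalIntegral.integral_add h1 h2, ← intervalIntegral.integral_add (h1.add h2) h3,
      ← intervalIntegral.integral_add ((h1.add h2).add h3) h4]
    have hz : ∀ ν : ℝ, (Ac * (resolventIm A ν * M * (resolventIm A ν)ᴴ)) i k +
        ((resolventIm A ν * M * (resolventIm A ν)ᴴ) * Acᵀ) i k +
        (resolventIm A ν * M) i k + (M * (resolventIm A ν)ᴴ) i k = 0 := by
      intro ν
      have hk := key A hA ν M
      have hk' : (Ac * (resolventIm A ν * M * (resolventIm A ν)ᴴ) +
          (resolventIm A ν * M * (resolventIm A ν)ᴴ) * Acᵀ +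
          M * (resolventIm A ν)ᴴ + resolventIm A ν * M) i k = (0 : Matrix (Fin n) (Fin n) ℂ) i k := by
        rw [hk]
      simp only [Matrix.add_apply, Matrix.zero_apply] at hk'
      linear_combination hk'
    calc (∫ ν in (-Ω)..Ω, ((Ac * (resolventIm A ν * M * (resolventIm A ν)ᴴ)) i k +
          ((resolventIm A ν * M * (resolventIm A ν)ᴴ) * Acᵀ) i k +
          (resolventIm A ν * M) i k + (M * (resolventIm A ν)ᴴ) i k))
        = ∫ _ν in (-Ω)..Ω, (0 : ℂ) := by
          apply intervalIntegral.integral_congr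
          intro ν _
          exact hz ν
      _ = 0 := by simp
  linear_combination c * hsum
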